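/- (Split–Split, mixed) For every type X, every step function f : S X and rationals a, b, c, d strictly between 0 and 1, if a + b − a·b = c and d·c = a then splitL (splitR f a) b ≍ splitR (splitL f c) d, where ≍ is the lifted equality relation on S X. -/

import Mathlib

set_option linter.unusedVariables false

/-- Rationals strictly between 0 and 1. -/
abbrev OO : Type := {q : ℚ // 0 < q ∧ q < 1}

/-- Rational step functions on the unit interval with values in `X`. -/
inductive S (X : Type) : Type
  | const : X → S X
  | glue : OO → S X → S X → S X

namespace S

def divO (a o : OO) (h : a.1 < o.1) : OO :=
  ⟨a.1 / o.1, div_pos a.2.1 o.2.1, (div_lt_one o.2.1).2 h⟩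

def subO (a o : OO) (h : o.1 < a.1) : OO :=
  ⟨(a.1 - o.1) / (1 - o.1),
    div_pos (by linarith) (by linarith [o.2.2]),
    (div_lt_one (by linarith [o.2.2])).2 (by linarith [a.2.2])⟩

/-- Left split: the part of the step function on `[0,a]`, rescaled to `[0,1]`. -/
def splitL {X : Type} : S X → OO → S X
  | const x, _ => const x
  | glue o f g, a =>
      if h : a.1 < o.1 then splitL f (divO a o h)
      else if h' : o.1 < a.1 then glue (divO o a h') f (splitL g (subO a o h'))
      else f

/-- Right split: the part of the step function on `[a,1]`, rescaled to `[0,1]`. -/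
def splitR {X : Type} : S X → OO → S X
  | const x, _ => const x
  | glue o f g, a =>
      if h : a.1 < o.1 then glue (subO o a h) (splitR f (divO a o h)) g
      else if h' : o.1 < a.1 then splitR g (subO a o h')
      else g

/-- The catamorphism (fold) for step functions. -/
def fold {X Y : Type} (φ : X → Y) (ψ : OO → Y → Y → Y) : S X → Y
  | const x => φ x
  | glue o f g => ψ o (fold φ ψ f) (fold φ ψ g)

/-- `map` for step functions. -/
def mapS {X Y : Type} (f : X → Y) : S X → S Y
  | const x => const (f x)
  | glue o l r => glue o (mapS f l) (mapS f r)

/-- The applicative `ap` (pointwise application) for step functions. -/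
def ap {X Y : Type} : S (X → Y) → S X → S Y
  | const f, x => mapS f x
  | glue o fl fr, x => glue o (ap fl (splitL x o)) (ap fr (splitR x o))

/-- Binary map. -/
def map2 {X Y Z : Type} (f : X → Y → Z) (a : S X) (b : S Y) : S Z :=
  ap (mapS f a) b

/-- `fold⋆`: a step function of propositions holds everywhere. -/
def foldStar : S Prop → Prop := fold id (fun _ p q => p ∧ q)

/-- Lifting of a relation to step functions: it holds pointwise everywhere. -/
def liftRel {X Y : Type} (R : X → Y → Prop) (f : S X) (g : S Y) : Prop :=
  foldStar (map2 R f g)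

/-- The equivalence `≍` on step functions: the lifting of equality. -/
def equivS {X : Type} (f g : S X) : Prop := liftRel Eq f g

def foldSup : S ℚ → ℚ := fold id (fun _ x y => max x y)

def foldAffine : S ℚ → ℚ := fold id (fun o x y => o.1 * x + (1 - o.1) * y)

def normInf (f : S ℚ) : ℚ := foldSup (mapS (fun q => |q|) f)

def normOne (f : S ℚ) : ℚ := foldAffine (mapS (fun q => |q|) f)

def dInf (f g : S ℚ) : ℚ := normInf (map2 (· - ·) f g)

def dOne (f g : S ℚ) : ℚ := normOne (map2 (· - ·) f g)

end S


namespace S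

lemma splitL_glue_self {X : Type} (o : OO) (l r : S X) : splitL (glue o l r) o = l := by
  simp [splitL]

lemma splitR_glue_self {X : Type} (o : OO) (l r : S X) : splitR (glue o l r) o = r := by
  simp [splitR]

lemma equivS_refl {X : Type} (f : S X) : equivS f f := by
  induction f with
  | const x => exact rfl
  | glue o l r ihl ihr =>
      show foldStar (map2 Eq (glue o l r) (glue o l r))
      simp only [map2, mapS, ap, splitL_glue_self, splitR_glue_self]
      exact ⟨ihl, ihr⟩

lemma equivS_glue {X : Type} (o : OO) {l r l' r' : S X}
    (h : equivS l l') (h' : equivS r r') : equivS (glue o l r) (glue o l' r') := by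
  show foldStar (map2 Eq (glue o l r) (glue o l' r'))
  simp only [map2, mapS, ap, splitL_glue_self, splitR_glue_self]
  exact ⟨h, h'⟩

end S

open S

/-- Split–Split, mixed: if `a + b − a·b = c` and `d·c = a` then
`splitL (splitR f a) b ≍ splitR (splitL f c) d`. -/
theorem splitL_splitR_equiv {X : Type} (f : S X) (a b c d : OO)
    (h1 : a.1 + b.1 - a.1 * b.1 = c.1) (h2 : d.1 * c.1 = a.1) :
    equivS (splitL (splitR f a) b) (splitR (splitL f c) d) := by
  induction f generalizing a b c d with
  | const x => exact rfl
  | glue o u v ihu ihv =>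
    have ha0 := a.2.1; have ha1 := a.2.2
    have hb0 := b.2.1; have hb1 := b.2.2
    have hc0 := c.2.1; have hc1 := c.2.2
    have hd0 := d.2.1; have hd1 := d.2.2
    have ho0 := o.2.1; have ho1 := o.2.2
    have hac : a.1 < c.1 := by nlinarith
    have hd : d.1 = a.1 / c.1 := by
      rw [eq_div_iff (ne_of_gt hc0)]; exact h2
    rcases lt_trichotomy a.1 o.1 with hao | hao | hao
    · -- a < o
      simp only [splitR]
      rw [dif_pos hao]
      rcases lt_trichotomy c.1 o.1 with hco | hco | hco
      · -- c < o
        have hb : b.1 < (subO o a hao).1 := by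
          show b.1 < (o.1 - a.1) / (1 - a.1)
          rw [lt_div_iff₀ (by linarith)]
          nlinarith
        simp only [splitL]
        rw [dif_pos hb, dif_pos hco]
        refine ihu _ _ _ _ ?_ ?_
        · show a.1/o.1 + b.1/((o.1-a.1)/(1-a.1))
            - (a.1/o.1) * (b.1/((o.1-a.1)/(1-a.1))) = c.1/o.1
          rw [← h1]
          have hne1 : o.1 ≠ 0 := ne_of_gt ho0
          have hne2 : o.1 - a.1 ≠ 0 := by linarith
          have hne3 : (1:ℚ) - a.1 ≠ 0 := by linarith
          field_simp
          ring
        · show d.1 * (c.1/o.1) = a.1/o.1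
          rw [hd]
          have hne1 : o.1 ≠ 0 := ne_of_gt ho0
          have hne4 : c.1 ≠ 0 := ne_of_gt hc0
          field_simp
      · -- c = o
        have hbeq : b.1 = (subO o a hao).1 := by
          show b.1 = (o.1 - a.1) / (1 - a.1)
          rw [eq_div_iff (by linarith : (1:ℚ) - a.1 ≠ 0)]
          linear_combination h1 + hco
        simp only [splitL]
        rw [dif_neg (by rw [hbeq]; exact lt_irrefl _),
          dif_neg (by rw [hbeq]; exact lt_irrefl _),
          dif_neg (by rw [hco]; exact lt_irrefl _),
          dif_neg (by rw [hco]; exact lt_irrefl _)]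
        have heq : divO a o hao = d := by
          apply Subtype.ext
          show a.1 / o.1 = d.1
          rw [div_eq_iff (ne_of_gt ho0)]
          linear_combination -h2 + d.1 * hco
        rw [heq]; exact equivS_refl _
      · -- o < c
        have hb : (subO o a hao).1 < b.1 := by
          show (o.1 - a.1) / (1 - a.1) < b.1
          rw [div_lt_iff₀ (by linarith)]
          nlinarith
        have hd' : d.1 < (divO o c hco).1 := by
          show d.1 < o.1 / c.1
          rw [lt_div_iff₀ hc0]
          nlinarith [h2]
        simp only [splitL]
        rw [dif_neg (not_lt.2 (le_of_lt hb)), dif_pos hb,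
          dif_neg (not_lt.2 (le_of_lt hco)), dif_pos hco]
        simp only [splitR]
        rw [dif_pos hd']
        have hhead : divO (subO o a hao) b hb = subO (divO o c hco) d hd' := by
          apply Subtype.ext
          show ((o.1-a.1)/(1-a.1))/b.1 = (o.1/c.1 - d.1)/(1 - d.1)
          have hne4 : c.1 ≠ 0 := ne_of_gt hc0
          have hne3 : (1:ℚ) - a.1 ≠ 0 := by linarith
          have e1 : o.1/c.1 - d.1 = (o.1-a.1)/c.1 := by
            rw [hd, div_sub_div_same]
          have e2 : (1:ℚ) - d.1 = (c.1-a.1)/c.1 := by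
            rw [hd]; field_simp
          rw [e1, e2, div_div, div_div_div_cancel_right₀ hne4]
          congr 1
          linear_combination h1
        rw [hhead]
        apply equivS_glue
        · have heq : divO a o hao = divO d (divO o c hco) hd' := by
            apply Subtype.ext
            show a.1/o.1 = d.1/(o.1/c.1)
            rw [hd, div_div_div_cancel_right₀ (ne_of_gt hc0)]
          rw [heq]; exact equivS_refl _
        · have heq : subO b (subO o a hao) hb = subO c o hco := by
            apply Subtype.ext
            show (b.1 - (o.1-a.1)/(1-a.1))/(1 - (o.1-a.1)/(1-a.1)) = (c.1-o.1)/(1-o.1)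
            have hne3 : (1:ℚ) - a.1 ≠ 0 := by linarith
            have hne7 : (1:ℚ) - o.1 ≠ 0 := by linarith
            have hkey : (1:ℚ) - (o.1-a.1)/(1-a.1) = (1-o.1)/(1-a.1) := by
              field_simp
              ring
            have e3 : b.1 - (o.1-a.1)/(1-a.1) = (c.1-o.1)/(1-a.1) := by
              rw [← h1]; field_simp; ring
            rw [hkey, e3, div_div_div_cancel_right₀ hne3]
          rw [heq]; exact equivS_refl _
    · -- a = o
      have hco : o.1 < c.1 := by rw [← hao]; exact hac
      simp only [splitR, splitL]
      rw [dif_neg (by rw [hao]; exact lt_irrefl _), dif_neg (by rw [hao]; exact lt_irrefl _),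
        dif_neg (not_lt.2 (le_of_lt hco)), dif_pos hco]
      have hdeq : d.1 = (divO o c hco).1 := by
        show d.1 = o.1/c.1
        rw [hd, ← hao]
      simp only [splitR]
      rw [dif_neg (by rw [hdeq]; exact lt_irrefl _), dif_neg (by rw [hdeq]; exact lt_irrefl _)]
      have heq : subO c o hco = b := by
        apply Subtype.ext
        show (c.1-o.1)/(1-o.1) = b.1
        rw [div_eq_iff (by linarith : (1:ℚ) - o.1 ≠ 0)]
        rw [← hao]
        linear_combination -h1
      rw [heq]; exact equivS_refl _
    · -- o < a
      have hco : o.1 < c.1 := lt_trans hao hac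
      have hd' : (divO o c hco).1 < d.1 := by
        show o.1/c.1 < d.1
        rw [div_lt_iff₀ hc0]
        nlinarith [h2]
      simp only [splitR, splitL]
      rw [dif_neg (not_lt.2 (le_of_lt hao)), dif_pos hao,
        dif_neg (not_lt.2 (le_of_lt hco)), dif_pos hco]
      simp only [splitR]
      rw [dif_neg (not_lt.2 (le_of_lt hd')), dif_pos hd']
      refine ihv _ _ _ _ ?_ ?_
      · show (a.1-o.1)/(1-o.1) + b.1 - ((a.1-o.1)/(1-o.1)) * b.1 = (c.1-o.1)/(1-o.1)
        rw [← h1]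
        have hne : (1:ℚ) - o.1 ≠ 0 := by linarith
        field_simp
        ring
      · show ((d.1 - o.1/c.1)/(1 - o.1/c.1)) * ((c.1-o.1)/(1-o.1)) = (a.1-o.1)/(1-o.1)
        rw [hd]
        have hne4 : c.1 ≠ 0 := ne_of_gt hc0
        have hne8 : c.1 - o.1 ≠ 0 := by linarith
        have hne : (1:ℚ) - o.1 ≠ 0 := by linarith
        have hkey : (1:ℚ) - o.1/c.1 = (c.1-o.1)/c.1 := by field_simp
        rw [hkey]
        field_simp
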